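/- arXiv:2003.06803 — 7 statements merged into one kernel-verified Lean document; each statement's English description precedes it below -/
import Mathlib

section
/- If ψ : V(G) → I is a perfect coloring of a graph G, Φ = {φ₁, …, φ_k} is a family of perfect colorings of a graph H using pairwise disjoint color sets J₁, …, J_k, then the coloring of the lexicographic product G·H defined by (v₁, v₂) ↦ φ_{ψ(v₁)}(v₂) is a perfect coloring of G·H. -/
/-- The infinite path graph on the integers. -/
def pathGraph : SimpleGraph ℤ := SimpleGraph.fromRel (fun u v => v = u + 1)

/-- Number of neighbors of `v` colored `j` under coloring `c`. -/
noncomputable def nbrCount {V I : Type*} (G : SimpleGraph V) (c : V → I) (v : V) (j : I) : ℕ :=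
  {u | G.Adj v u ∧ c u = j}.ncard

/-- A coloring is perfect if the number of neighbors of each color depends only
on the color of the vertex. -/
def IsPerfectColoring {V I : Type*} (G : SimpleGraph V) (c : V → I) : Prop :=
  ∀ v w, c v = c w → ∀ j, nbrCount G c v j = nbrCount G c w j

/-- Lexicographic product of two simple graphs. -/
def lexProd {V W : Type*} (G : SimpleGraph V) (H : SimpleGraph W) : SimpleGraph (V × W) :=
  SimpleGraph.fromRel (fun p q => G.Adj p.1 q.1 ∨ (p.1 = q.1 ∧ H.Adj p.2 q.2))

private lemma myNcardProd {α β : Type*} (s : Set α) (t : Set β) :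
    (s ×ˢ t).ncard = s.ncard * t.ncard := by
  rw [← Nat.card_coe_set_eq, ← Nat.card_coe_set_eq, ← Nat.card_coe_set_eq,
    Nat.card_congr (Equiv.Set.prod s t), Nat.card_prod]

/-- Disjunctive colorings of a lexicographic product are perfect. -/
theorem disjunctive_coloring_isPerfect {V W I J : Type*}
    (G : SimpleGraph V) (H : SimpleGraph W)
    (hGlf : ∀ v, (G.neighborSet v).Finite) (hHlf : ∀ w, (H.neighborSet w).Finite)
    (ψ : V → I) (hψ : IsPerfectColoring G ψ)
    (Φ : I → W → J) (hΦ : ∀ i, IsPerfectColoring H (Φ i))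
    (hdisj : ∀ i i', i ≠ i' → ∀ w w', Φ i w ≠ Φ i' w') :
    IsPerfectColoring (lexProd G H) (fun p => Φ (ψ p.1) p.2) := by
  have hadj : ∀ (a b : V × W), (lexProd G H).Adj a b ↔
      (G.Adj a.1 b.1 ∨ (a.1 = b.1 ∧ H.Adj a.2 b.2)) := by
    intro a b
    constructor
    · rintro ⟨hne, h | h⟩
      · exact h
      · exact h.imp G.adj_symm (fun h' => ⟨h'.1.symm, H.adj_symm h'.2⟩)
    · intro h
      refine ⟨?_, Or.inl h⟩
      rintro rfl
      rcases h with h | ⟨_, h⟩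
      · exact G.irrefl h
      · exact H.irrefl h
  rintro ⟨v, w⟩ ⟨v', w'⟩ hc j
  simp only at hc
  have hψeq : ψ v = ψ v' := by
    by_contra hne
    exact hdisj _ _ hne w w' hc
  have hSet : ∀ (a : V) (b : W),
      {q : V × W | (lexProd G H).Adj (a, b) q ∧ Φ (ψ q.1) q.2 = j} =
        {q : V × W | G.Adj a q.1 ∧ Φ (ψ q.1) q.2 = j} ∪
        (fun x => (a, x)) '' {x | H.Adj b x ∧ Φ (ψ a) x = j} := by
    intro a b
    ext ⟨u, x⟩
    simp only [Set.mem_setOf_eq, Set.mem_union, Set.mem_image, hadj]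
    constructor
    · rintro ⟨hA | ⟨rfl, hH⟩, hcol⟩
      · exact Or.inl ⟨hA, hcol⟩
      · exact Or.inr ⟨x, ⟨hH, hcol⟩, rfl⟩
    · rintro (⟨hA, hcol⟩ | ⟨y, ⟨hH, hcol⟩, heq⟩)
      · exact ⟨Or.inl hA, hcol⟩
      · cases heq
        exact ⟨Or.inr ⟨rfl, hH⟩, hcol⟩
  have hBfin : ∀ (a : V) (b : W),
      ((fun x => (a, x)) '' {x | H.Adj b x ∧ Φ (ψ a) x = j}).Finite :=
    fun a b => ((hHlf b).subset fun x hx => hx.1).image _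
  have hBcard : ∀ (a : V) (b : W),
      ((fun x => (a, x)) '' {x | H.Adj b x ∧ Φ (ψ a) x = j}).ncard =
        nbrCount H (Φ (ψ a)) b j := by
    intro a b
    rw [Set.ncard_image_of_injective _ (fun x y h => ((Prod.mk.injEq _ _ _ _).mp h).2)]
    rfl
  have hdisjAB : ∀ (a : V) (b : W),
      Disjoint {q : V × W | G.Adj a q.1 ∧ Φ (ψ q.1) q.2 = j}
        ((fun x => (a, x)) '' {x | H.Adj b x ∧ Φ (ψ a) x = j}) := by
    intro a b
    rw [Set.disjoint_left]
    rintro ⟨u, x⟩ ⟨hA, _⟩ ⟨y, _, heq⟩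
    cases heq
    exact G.irrefl hA
  have hHcount : nbrCount H (Φ (ψ v)) w j = nbrCount H (Φ (ψ v')) w' j := by
    rw [← hψeq] at hc ⊢
    exact hΦ (ψ v) w w' hc j
  simp only [nbrCount]
  rw [hSet v w, hSet v' w']
  by_cases hj : ∃ i x, Φ i x = j
  · obtain ⟨i₁, x₁, hx₁⟩ := hj
    have hA : ∀ a : V, {q : V × W | G.Adj a q.1 ∧ Φ (ψ q.1) q.2 = j} =
        {u | G.Adj a u ∧ ψ u = i₁} ×ˢ {x | Φ i₁ x = j} := by
      intro a
      ext ⟨u, x⟩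
      simp only [Set.mem_setOf_eq, Set.mem_prod]
      constructor
      · rintro ⟨h1, h2⟩
        have hui : ψ u = i₁ := by
          by_contra hne
          exact hdisj _ _ hne x x₁ (h2.trans hx₁.symm)
        exact ⟨⟨h1, hui⟩, hui ▸ h2⟩
      · rintro ⟨⟨h1, h2⟩, h3⟩
        exact ⟨h1, h2 ▸ h3⟩
    have hNfin : ∀ a : V, ({u | G.Adj a u ∧ ψ u = i₁}).Finite :=
      fun a => (hGlf a).subset fun u hu => hu.1
    have hNcard : {u | G.Adj v u ∧ ψ u = i₁}.ncard = {u | G.Adj v' u ∧ ψ u = i₁}.ncard :=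
      hψ v v' hψeq i₁
    rw [hA v, hA v']
    by_cases hF : {x | Φ i₁ x = j}.Finite
    · rw [Set.ncard_union_eq (hA v ▸ hdisjAB v w) ((hNfin v).prod hF) (hBfin v w),
        Set.ncard_union_eq (hA v' ▸ hdisjAB v' w') ((hNfin v').prod hF) (hBfin v' w'),
        myNcardProd, myNcardProd, hNcard, hBcard, hBcard, hHcount]
    · by_cases hN : {u | G.Adj v u ∧ ψ u = i₁} = ∅
      · have hN' : {u | G.Adj v' u ∧ ψ u = i₁} = ∅ :=
          (Set.ncard_eq_zero (hNfin v')).mp (by rw [← hNcard, hN, Set.ncard_empty])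
        rw [hN, hN', Set.empty_prod, Set.empty_union, Set.empty_union, hBcard, hBcard,
          hHcount]
      · have hNne : {u | G.Adj v u ∧ ψ u = i₁}.Nonempty := Set.nonempty_iff_ne_empty.mpr hN
        have hN' : {u | G.Adj v' u ∧ ψ u = i₁}.Nonempty := by
          rw [Set.nonempty_iff_ne_empty]
          intro h
          exact hN ((Set.ncard_eq_zero (hNfin v)).mp (by rw [hNcard, h, Set.ncard_empty]))
        have hinf : ∀ (a : V) (b : W), {u | G.Adj a u ∧ ψ u = i₁}.Nonempty →
            ({u | G.Adj a u ∧ ψ u = i₁} ×ˢ {x | Φ i₁ x = j} ∪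
              (fun x => (a, x)) '' {x | H.Adj b x ∧ Φ (ψ a) x = j}).Infinite := by
          intro a b hne
          apply Set.Infinite.mono Set.subset_union_left
          rw [Set.infinite_prod]
          exact Or.inr ⟨hF, hne⟩
        rw [Set.Infinite.ncard (hinf v w hNne), Set.Infinite.ncard (hinf v' w' hN')]
  · push_neg at hj
    have hA : ∀ a : V, {q : V × W | G.Adj a q.1 ∧ Φ (ψ q.1) q.2 = j} = ∅ := by
      intro a
      ext ⟨u, x⟩
      simp only [Set.mem_setOf_eq, Set.mem_empty_iff_false, iff_false, not_and]
      exact fun _ h => hj _ _ h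
    rw [hA v, hA v', Set.empty_union, Set.empty_union, hBcard, hBcard, hHcount]
end

section
/- Let G be a finite regular simple graph with a perfect coloring φ. Define colors i and j to be equivalent if the coloring obtained from φ by identifying colors i and j is still perfect. Then this relation is an equivalence relation on the set of colors used by φ. -/
section AuxMerge

variable {V I : Type*} [Fintype V] [DecidableEq I] {G : SimpleGraph V}

open Classical in
lemma nbrCount_eq_card (c : V → I) (v : V) (j : I) :
    nbrCount G c v j = (Finset.univ.filter fun u => G.Adj v u ∧ c u = j).card := by
  classical
  rw [nbrCount, ← Set.ncard_coe_finset]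
  congr 1
  ext u
  simp

open Classical in
lemma doubleCount (c : V → I) (a b : I) :
    ∑ v ∈ Finset.univ.filter (fun v => c v = a), nbrCount G c v b
      = ∑ v ∈ Finset.univ.filter (fun v => c v = b), nbrCount G c v a := by
  classical
  have h : ∀ (x y : I),
      ∑ v ∈ Finset.univ.filter (fun v => c v = x), nbrCount G c v y
        = ∑ v : V, ∑ u : V, if c v = x ∧ G.Adj v u ∧ c u = y then 1 else 0 := by
    intro x y
    rw [Finset.sum_filter]
    apply Finset.sum_congr rfl
    intro v _
    by_cases hv : c v = x
    · simp only [hv, if_true, nbrCount_eq_card, Finset.card_filter]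
      apply Finset.sum_congr rfl
      intro u _
      simp [hv]
    · simp [hv]
  rw [h, h, Finset.sum_comm]
  apply Finset.sum_congr rfl
  intro v _
  apply Finset.sum_congr rfl
  intro u _
  congr 1
  simp only [eq_iff_iff]
  constructor
  · rintro ⟨h1, h2, h3⟩; exact ⟨h3, h2.symm, h1⟩
  · rintro ⟨h1, h2, h3⟩; exact ⟨h3, h2.symm, h1⟩

lemma nbr_merge_ne (φ : V → I) (i j : I) (v : V) (l : I) (hli : l ≠ i) (hlj : l ≠ j) :
    nbrCount G (fun u => if φ u = j then i else φ u) v l = nbrCount G φ v l := by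
  unfold nbrCount
  congr 1
  ext u
  simp only [Set.mem_setOf_eq]
  constructor
  · rintro ⟨ha, hc⟩
    refine ⟨ha, ?_⟩
    by_cases h : φ u = j
    · rw [if_pos h] at hc; exact absurd hc.symm hli
    · rwa [if_neg h] at hc
  · rintro ⟨ha, hc⟩
    refine ⟨ha, ?_⟩
    have h : φ u ≠ j := by rw [hc]; exact hlj
    rw [if_neg h, hc]

lemma nbr_merge_j (φ : V → I) {i j : I} (hij : i ≠ j) (v : V) :
    nbrCount G (fun u => if φ u = j then i else φ u) v j = 0 := by
  unfold nbrCount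
  convert Set.ncard_empty V
  ext u
  simp only [Set.mem_setOf_eq, Set.mem_empty_iff_false, iff_false, not_and]
  intro _
  by_cases h : φ u = j
  · rw [if_pos h]; exact hij
  · rw [if_neg h]; exact h

lemma nbr_merge_i (φ : V → I) {i j : I} (hij : i ≠ j) (v : V) :
    nbrCount G (fun u => if φ u = j then i else φ u) v i
      = nbrCount G φ v i + nbrCount G φ v j := by
  unfold nbrCount
  have hset : {u | G.Adj v u ∧ (fun u => if φ u = j then i else φ u) u = i}
      = {u | G.Adj v u ∧ φ u = i} ∪ {u | G.Adj v u ∧ φ u = j} := by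
    ext u
    simp only [Set.mem_setOf_eq, Set.mem_union]
    constructor
    · rintro ⟨ha, hc⟩
      by_cases h : φ u = j
      · exact Or.inr ⟨ha, h⟩
      · rw [if_neg h] at hc; exact Or.inl ⟨ha, hc⟩
    · rintro (⟨ha, hc⟩ | ⟨ha, hc⟩)
      · have h : φ u ≠ j := by rw [hc]; exact hij
        exact ⟨ha, by rw [if_neg h, hc]⟩
      · exact ⟨ha, by rw [if_pos hc]⟩
  rw [hset, Set.ncard_union_eq ?_ (Set.toFinite _) (Set.toFinite _)]
  rw [Set.disjoint_left]
  rintro u ⟨_, hu1⟩ ⟨_, hu2⟩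
  exact hij (hu1 ▸ hu2 ▸ rfl)

/-- Matrix condition equivalent to perfectness of the coloring merging `j` into `i`. -/
def MergeCond (G : SimpleGraph V) (φ : V → I) (i j : I) : Prop :=
  ∀ v w, φ v = i → φ w = j →
    (∀ l, l ≠ i → l ≠ j → nbrCount G φ v l = nbrCount G φ w l) ∧
    nbrCount G φ v i + nbrCount G φ v j = nbrCount G φ w i + nbrCount G φ w j

lemma mergeCond_nbr {φ : V → I} {i j : I} (hij : i ≠ j) (hm : MergeCond G φ i j)
    {v w : V} (hv : φ v = i) (hw : φ w = j) (l : I) :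
    nbrCount G (fun u => if φ u = j then i else φ u) v l
      = nbrCount G (fun u => if φ u = j then i else φ u) w l := by
  obtain ⟨h1, h2⟩ := hm v w hv hw
  by_cases hlj : l = j
  · rw [hlj, nbr_merge_j φ hij, nbr_merge_j φ hij]
  · by_cases hli : l = i
    · rw [hli, nbr_merge_i φ hij, nbr_merge_i φ hij]; exact h2
    · rw [nbr_merge_ne φ i j v l hli hlj, nbr_merge_ne φ i j w l hli hlj]
      exact h1 l hli hlj

lemma merge_perfect_iff {φ : V → I} (hφ : IsPerfectColoring G φ) {i j : I} (hij : i ≠ j) :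
    IsPerfectColoring G (fun v => if φ v = j then i else φ v) ↔ MergeCond G φ i j := by
  constructor
  · intro h v w hv hw
    have hcv : (if φ v = j then i else φ v) = i := by
      rw [if_neg (by rw [hv]; exact hij), hv]
    have hcw : (if φ w = j then i else φ w) = i := by rw [if_pos hw]
    constructor
    · intro l hli hlj
      have := h v w (hcv.trans hcw.symm) l
      rwa [nbr_merge_ne φ i j v l hli hlj, nbr_merge_ne φ i j w l hli hlj] at this
    · have := h v w (hcv.trans hcw.symm) i
      rwa [nbr_merge_i φ hij, nbr_merge_i φ hij] at this
  · intro hm v w hc l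
    by_cases hvw : φ v = φ w
    · have key := hφ v w hvw
      by_cases hlj : l = j
      · rw [hlj, nbr_merge_j φ hij, nbr_merge_j φ hij]
      · by_cases hli : l = i
        · rw [hli, nbr_merge_i φ hij, nbr_merge_i φ hij, key i, key j]
        · rw [nbr_merge_ne φ i j v l hli hlj, nbr_merge_ne φ i j w l hli hlj]
          exact key l
    · have hc' : (if φ v = j then i else φ v) = (if φ w = j then i else φ w) := hc
      have hcase : (φ v = i ∧ φ w = j) ∨ (φ v = j ∧ φ w = i) := by
        by_cases h1 : φ v = j <;> by_cases h2 : φ w = j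
        · exact absurd (h1.trans h2.symm) hvw
        · rw [if_pos h1, if_neg h2] at hc'; exact Or.inr ⟨h1, hc'.symm⟩
        · rw [if_neg h1, if_pos h2] at hc'; exact Or.inl ⟨hc', h2⟩
        · rw [if_neg h1, if_neg h2] at hc'; exact absurd hc' hvw
      rcases hcase with ⟨hv, hw⟩ | ⟨hv, hw⟩
      · exact mergeCond_nbr hij hm hv hw l
      · exact (mergeCond_nbr hij hm hw hv l).symm

lemma mergeCond_symm {φ : V → I} {i j : I} (hm : MergeCond G φ i j) :
    MergeCond G φ j i := by
  intro v w hv hw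
  obtain ⟨h1, h2⟩ := hm w v hw hv
  exact ⟨fun l hl1 hl2 => (h1 l hl2 hl1).symm, by omega⟩

open Classical in
lemma sum_class_nbr {φ : V → I} (hφ : IsPerfectColoring G φ) {x : I} {vx : V}
    (hvx : φ vx = x) (y : I) :
    ∑ v ∈ Finset.univ.filter (fun v => φ v = x), nbrCount G φ v y
      = (Finset.univ.filter (fun v => φ v = x)).card * nbrCount G φ vx y := by
  classical
  rw [Finset.sum_congr rfl (fun v hv => hφ v vx
    (by rw [(Finset.mem_filter.mp hv).2, hvx]) y), Finset.sum_const, smul_eq_mul]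

lemma mergeCond_trans {φ : V → I} (hφ : IsPerfectColoring G φ) {i j k : I}
    (hij : i ≠ j) (hjk : j ≠ k) (hik : i ≠ k)
    {vi vj vk : V} (hvi : φ vi = i) (hvj : φ vj = j) (hvk : φ vk = k)
    (h1 : MergeCond G φ i j) (h2 : MergeCond G φ j k) : MergeCond G φ i k := by
  classical
  obtain ⟨C1, A1⟩ := h1 vi vj hvi hvj
  obtain ⟨C2, A2⟩ := h2 vj vk hvj hvk
  -- abbreviations
  set a := nbrCount G φ vi i with ha
  set b := nbrCount G φ vi j with hb
  set e := nbrCount G φ vi k with he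
  set f := nbrCount G φ vj i with hf
  set g := nbrCount G φ vj j with hg
  set hh := nbrCount G φ vj k with hhh
  set p := nbrCount G φ vk i with hp
  set q := nbrCount G φ vk j with hq
  set r := nbrCount G φ vk k with hr
  have heh : e = hh := C1 k (Ne.symm hik) (Ne.symm hjk)
  have hfp : f = p := C2 i hij hik
  -- class sizes
  set ni := (Finset.univ.filter (fun v => φ v = i)).card with hni
  set nj := (Finset.univ.filter (fun v => φ v = j)).card with hnj
  set nk := (Finset.univ.filter (fun v => φ v = k)).card with hnk
  have hnipos : 0 < ni := Finset.card_pos.mpr ⟨vi, Finset.mem_filter.mpr ⟨Finset.mem_univ _, hvi⟩⟩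
  have hnkpos : 0 < nk := Finset.card_pos.mpr ⟨vk, Finset.mem_filter.mpr ⟨Finset.mem_univ _, hvk⟩⟩
  -- double counting equations
  have E1 : ni * b = nj * f := by
    have := doubleCount (G := G) φ i j
    rwa [sum_class_nbr hφ hvi j, sum_class_nbr hφ hvj i] at this
  have E2 : ni * e = nk * p := by
    have := doubleCount (G := G) φ i k
    rwa [sum_class_nbr hφ hvi k, sum_class_nbr hφ hvk i] at this
  have E3 : nj * hh = nk * q := by
    have := doubleCount (G := G) φ j k
    rwa [sum_class_nbr hφ hvj k, sum_class_nbr hφ hvk j] at this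
  have e2' : ni * e = nk * f := by rw [E2, hfp]
  have e3' : nj * e = nk * q := by rw [heh, E3]
  have key : (ni * nk) * b = (ni * nk) * q := by
    calc (ni * nk) * b = nk * (ni * b) := by ring
      _ = nk * (nj * f) := by rw [E1]
      _ = nj * (nk * f) := by ring
      _ = nj * (ni * e) := by rw [e2']
      _ = ni * (nj * e) := by ring
      _ = ni * (nk * q) := by rw [e3']
      _ = (ni * nk) * q := by ring
  have hbq : b = q := Nat.eq_of_mul_eq_mul_left (Nat.mul_pos hnipos hnkpos) key
  have hsum : a + e = p + r := by omega
  -- now prove the condition for arbitrary vertices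
  intro v w hv hw
  have hvvi : ∀ l, nbrCount G φ v l = nbrCount G φ vi l :=
    hφ v vi (by rw [hv, hvi])
  have hwvk : ∀ l, nbrCount G φ w l = nbrCount G φ vk l :=
    hφ w vk (by rw [hw, hvk])
  constructor
  · intro l hli hlk
    rw [hvvi l, hwvk l]
    by_cases hlj : l = j
    · subst hlj; exact hbq
    · exact (C1 l hli hlj).trans (C2 l hlj hlk)
  · rw [hvvi i, hvvi k, hwvk i, hwvk k]
    exact hsum

end AuxMerge

/-- On a finite regular graph, equivalence of colors of a perfect coloring
is an equivalence relation on the set of used colors. -/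
theorem colorEquiv_isEquivalence {V I : Type*} [Fintype V] [DecidableEq I]
    (G : SimpleGraph V) (d : ℕ) (hreg : ∀ v, (G.neighborSet v).ncard = d)
    (φ : V → I) (hφ : IsPerfectColoring G φ) :
    Equivalence (fun (i j : Set.range φ) =>
      IsPerfectColoring G (fun v => if φ v = (j : I) then (i : I) else φ v)) := by
  have hrefl : ∀ (i j : Set.range φ), (i : I) = (j : I) →
      IsPerfectColoring G (fun v => if φ v = (j : I) then (i : I) else φ v) := by
    intro i j hijeq
    have : (fun v => if φ v = (j : I) then (i : I) else φ v) = φ := by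
      funext v
      split_ifs with h
      · rw [h, hijeq]
      · rfl
    rw [this]
    exact hφ
  constructor
  · intro i
    exact hrefl i i rfl
  · intro i j h
    by_cases hij : (i : I) = (j : I)
    · exact hrefl j i hij.symm
    · rw [merge_perfect_iff hφ (Ne.symm hij)]
      exact mergeCond_symm ((merge_perfect_iff hφ hij).mp h)
  · intro i j k hij hjk
    by_cases h1 : (i : I) = (j : I)
    · have : (fun v => if φ v = (k : I) then (i : I) else φ v)
          = (fun v => if φ v = (k : I) then (j : I) else φ v) := by rw [h1]
      rw [this]
      exact hjk
    · by_cases h2 : (j : I) = (k : I)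
      · have : (fun v => if φ v = (k : I) then (i : I) else φ v)
            = (fun v => if φ v = (j : I) then (i : I) else φ v) := by rw [h2]
        rw [this]
        exact hij
      · by_cases h3 : (i : I) = (k : I)
        · exact hrefl i k h3
        · obtain ⟨vi, hvi⟩ := i.2
          obtain ⟨vj, hvj⟩ := j.2
          obtain ⟨vk, hvk⟩ := k.2
          rw [merge_perfect_iff hφ h3]
          exact mergeCond_trans hφ h1 h2 h3 hvi hvj hvk
            ((merge_perfect_iff hφ h1).mp hij) ((merge_perfect_iff hφ h2).mp hjk)
end

section
/- Let G be a finite regular graph with perfect coloring φ and let a, b, c be three distinct colors used by φ such that a is equivalent to b and b is equivalent to c (identifying either pair yields a perfect coloring). If moreover some vertex of color a has a neighbor of color b, then identifying colors a and c also yields a perfect coloring. -/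
section Aux
variable {V I : Type*} [Fintype V] [DecidableEq I]

open Classical in
lemma nbrCount_eq_sum (G : SimpleGraph V) (φ : V → I) (v : V) (k : I) :
    nbrCount G φ v k = ∑ u : V, if G.Adj v u ∧ φ u = k then 1 else 0 := by
  classical
  rw [nbrCount, Set.ncard_eq_toFinset_card', Set.toFinset_setOf, Finset.card_filter]

open Classical in
lemma class_sum (G : SimpleGraph V) (φ : V → I) (i j : I) :
    ∑ v ∈ Finset.univ.filter (fun v => φ v = i), nbrCount G φ v j
      = ∑ v : V, ∑ u : V, if φ v = i ∧ G.Adj v u ∧ φ u = j then 1 else 0 := by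
  rw [Finset.sum_filter]
  refine Finset.sum_congr rfl fun v _ => ?_
  by_cases h : φ v = i
  · simp [h, nbrCount_eq_sum]
  · simp [h]

open Classical in
lemma edge_sum (G : SimpleGraph V) (φ : V → I) (i j : I) :
    ∑ v ∈ Finset.univ.filter (fun v => φ v = i), nbrCount G φ v j
      = ∑ u ∈ Finset.univ.filter (fun u => φ u = j), nbrCount G φ u i := by
  rw [class_sum, class_sum, Finset.sum_comm]
  refine Finset.sum_congr rfl fun u _ => Finset.sum_congr rfl fun v _ => ?_
  congr 1
  simp only [eq_iff_iff]
  constructor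
  · rintro ⟨h1, h2, h3⟩; exact ⟨h3, h2.symm, h1⟩
  · rintro ⟨h1, h2, h3⟩; exact ⟨h3, h2.symm, h1⟩

lemma nbrCount_merge_self (G : SimpleGraph V) (φ : V → I) (a c : I) (hac : a ≠ c) (v : V) :
    nbrCount G (fun u => if φ u = c then a else φ u) v c = 0 := by
  have h : {u | G.Adj v u ∧ (fun u => if φ u = c then a else φ u) u = c} = ∅ := by
    ext u
    simp only [Set.mem_setOf_eq, Set.mem_empty_iff_false, iff_false, not_and]
    intro _ h
    split_ifs at h with h'
    · exact hac h
    · exact h' h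
  rw [nbrCount, h, Set.ncard_empty]

lemma nbrCount_merge_other (G : SimpleGraph V) (φ : V → I) (a c j : I)
    (hja : j ≠ a) (hjc : j ≠ c) (v : V) :
    nbrCount G (fun u => if φ u = c then a else φ u) v j = nbrCount G φ v j := by
  have h : {u | G.Adj v u ∧ (fun u => if φ u = c then a else φ u) u = j}
      = {u | G.Adj v u ∧ φ u = j} := by
    ext u
    simp only [Set.mem_setOf_eq, and_congr_right_iff]
    intro _
    split_ifs with h'
    · rw [h']; exact iff_of_false (fun hh => hja hh.symm) (fun hh => hjc hh.symm)
    · exact Iff.rfl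
  rw [nbrCount, h, nbrCount]

lemma nbrCount_merge_target (G : SimpleGraph V) (φ : V → I) (a c : I) (hac : a ≠ c) (v : V) :
    nbrCount G (fun u => if φ u = c then a else φ u) v a
      = nbrCount G φ v a + nbrCount G φ v c := by
  have h : {u | G.Adj v u ∧ (fun u => if φ u = c then a else φ u) u = a}
      = {u | G.Adj v u ∧ φ u = a} ∪ {u | G.Adj v u ∧ φ u = c} := by
    ext u
    simp only [Set.mem_setOf_eq, Set.mem_union]
    constructor
    · rintro ⟨hadj, h⟩
      split_ifs at h with h'
      · exact Or.inr ⟨hadj, h'⟩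
      · exact Or.inl ⟨hadj, h⟩
    · rintro (⟨hadj, h⟩ | ⟨hadj, h⟩)
      · refine ⟨hadj, ?_⟩; rw [if_neg (h ▸ fun hh => hac (hh ▸ rfl))]; exact h
      · refine ⟨hadj, ?_⟩; rw [if_pos h]
  have hdisj : Disjoint {u | G.Adj v u ∧ φ u = a} {u | G.Adj v u ∧ φ u = c} := by
    rw [Set.disjoint_left]
    rintro u ⟨_, h1⟩ ⟨_, h2⟩
    exact hac (h1 ▸ h2 ▸ rfl)
  rw [nbrCount, h, Set.ncard_union_eq hdisj (Set.toFinite _) (Set.toFinite _)]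
  rfl

end Aux

/-- Transitivity of color equivalence on a finite regular graph, given that
colors `a` and `b` actually occur on adjacent vertices. -/
theorem colorEquiv_trans {V I : Type*} [Fintype V] [DecidableEq I]
    (G : SimpleGraph V) (d : ℕ) (hreg : ∀ v, (G.neighborSet v).ncard = d)
    (φ : V → I) (hφ : IsPerfectColoring G φ)
    (a b c : I) (hab : a ≠ b) (hbc : b ≠ c) (hac : a ≠ c)
    (ha : ∃ v, φ v = a) (hb : ∃ v, φ v = b) (hc : ∃ v, φ v = c)
    (heqab : IsPerfectColoring G (fun v => if φ v = b then a else φ v))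
    (heqbc : IsPerfectColoring G (fun v => if φ v = c then b else φ v))
    (hadj : ∃ v u, φ v = a ∧ G.Adj v u ∧ φ u = b) :
    IsPerfectColoring G (fun v => if φ v = c then a else φ v) := by
  classical
  obtain ⟨va, hva⟩ := ha
  obtain ⟨vb, hvb⟩ := hb
  obtain ⟨vc, hvc⟩ := hc
  -- counts m(i,j) represented via representatives
  set maa := nbrCount G φ va a with hmaa
  set mab := nbrCount G φ va b with hmab
  set mac := nbrCount G φ va c with hmac
  set mba := nbrCount G φ vb a with hmba
  set mbb := nbrCount G φ vb b with hmbb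
  set mbc := nbrCount G φ vb c with hmbc
  set mca := nbrCount G φ vc a with hmca
  set mcb := nbrCount G φ vc b with hmcb
  set mcc := nbrCount G φ vc c with hmcc
  -- facts from heqab
  have habeq : (fun v => if φ v = b then a else φ v) va
      = (fun v => if φ v = b then a else φ v) vb := by
    simp [hva, hvb]
  have hA1 : ∀ j, j ≠ a → j ≠ b → nbrCount G φ va j = nbrCount G φ vb j := by
    intro j hja hjb
    have h := heqab va vb habeq j
    rwa [nbrCount_merge_other G φ a b j hja hjb,
      nbrCount_merge_other G φ a b j hja hjb] at h
  have hSa : maa + mab = mba + mbb := by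
    have h := heqab va vb habeq a
    rwa [nbrCount_merge_target G φ a b hab, nbrCount_merge_target G φ a b hab] at h
  -- facts from heqbc
  have hbceq : (fun v => if φ v = c then b else φ v) vb
      = (fun v => if φ v = c then b else φ v) vc := by
    simp [hvb, hvc]
  have hB1 : ∀ j, j ≠ b → j ≠ c → nbrCount G φ vb j = nbrCount G φ vc j := by
    intro j hjb hjc
    have h := heqbc vb vc hbceq j
    rwa [nbrCount_merge_other G φ b c j hjb hjc,
      nbrCount_merge_other G φ b c j hjb hjc] at h
  have hSb : mbb + mbc = mcb + mcc := by
    have h := heqbc vb vc hbceq b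
    rwa [nbrCount_merge_target G φ b c hbc, nbrCount_merge_target G φ b c hbc] at h
  have h1 : mac = mbc := hA1 c (Ne.symm hac) (Ne.symm hbc)
  have h2 : mba = mca := hB1 a hab hac
  -- edge counting
  set na := (Finset.univ.filter (fun v => φ v = a)).card with hna
  set nb := (Finset.univ.filter (fun v => φ v = b)).card with hnb
  set nc := (Finset.univ.filter (fun v => φ v = c)).card with hnc
  have hclass : ∀ (i : I) (vi : V), φ vi = i → ∀ j,
      ∑ v ∈ Finset.univ.filter (fun v => φ v = i), nbrCount G φ v j
        = (Finset.univ.filter (fun v => φ v = i)).card * nbrCount G φ vi j := by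
    intro i vi hvi j
    rw [Finset.card_eq_sum_ones, Finset.sum_mul, one_mul]
    refine Finset.sum_congr rfl fun v hv => ?_
    rw [Finset.mem_filter] at hv
    exact hφ v vi (hv.2.trans hvi.symm) j
  have hE : ∀ (i j : I) (vi vj : V), φ vi = i → φ vj = j →
      (Finset.univ.filter (fun v => φ v = i)).card * nbrCount G φ vi j
        = (Finset.univ.filter (fun v => φ v = j)).card * nbrCount G φ vj i := by
    intro i j vi vj hvi hvj
    rw [← hclass i vi hvi j, ← hclass j vj hvj i, edge_sum]
  have hE1 : na * mab = nb * mba := hE a b va vb hva hvb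
  have hE2 : nb * mbc = nc * mcb := hE b c vb vc hvb hvc
  have hE3 : na * mac = nc * mca := hE a c va vc hva hvc
  have hnapos : 0 < na := Finset.card_pos.mpr ⟨va, by simp [hva]⟩
  have hncpos : 0 < nc := Finset.card_pos.mpr ⟨vc, by simp [hvc]⟩
  have hG1 : mcb = mab := by
    have key : na * nc * mcb = na * nc * mab := by
      calc na * nc * mcb = na * (nc * mcb) := by ring
        _ = na * (nb * mbc) := by rw [hE2]
        _ = nb * (na * mbc) := by ring
        _ = nb * (na * mac) := by rw [h1]
        _ = nb * (nc * mca) := by rw [hE3]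
        _ = nb * (nc * mba) := by rw [h2]
        _ = nc * (nb * mba) := by ring
        _ = nc * (na * mab) := by rw [hE1]
        _ = na * nc * mab := by ring
    exact Nat.eq_of_mul_eq_mul_left (Nat.mul_pos hnapos hncpos) key
  have hG2 : maa + mac = mca + mcc := by omega
  -- cross count equality between colors a and c under merged coloring
  have hrep : ∀ j, j ≠ a → j ≠ c → nbrCount G φ va j = nbrCount G φ vc j := by
    intro j hja hjc
    by_cases hjb : j = b
    · subst hjb; exact hG1.symm
    · exact (hA1 j hja hjb).trans (hB1 j hjb hjc)
  have cross : ∀ v w, φ v = a → φ w = c → ∀ j,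
      nbrCount G (fun u => if φ u = c then a else φ u) v j
        = nbrCount G (fun u => if φ u = c then a else φ u) w j := by
    intro v w hv hw j
    by_cases hjc : j = c
    · rw [hjc, nbrCount_merge_self G φ a c hac, nbrCount_merge_self G φ a c hac]
    · by_cases hja : j = a
      · rw [hja, nbrCount_merge_target G φ a c hac, nbrCount_merge_target G φ a c hac,
          hφ v va (hv.trans hva.symm) a, hφ v va (hv.trans hva.symm) c,
          hφ w vc (hw.trans hvc.symm) a, hφ w vc (hw.trans hvc.symm) c]
        exact hG2
      · rw [nbrCount_merge_other G φ a c j hja hjc,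
          nbrCount_merge_other G φ a c j hja hjc,
          hφ v va (hv.trans hva.symm) j, hφ w vc (hw.trans hvc.symm) j]
        exact hrep j hja hjc
  intro v w hvw j
  have hcases : φ v = φ w ∨ (φ v = a ∧ φ w = c) ∨ (φ v = c ∧ φ w = a) := by
    by_cases hv : φ v = c <;> by_cases hw : φ w = c
    · exact Or.inl (hv.trans hw.symm)
    · simp only [hv, hw, if_true, if_false, if_pos, if_neg, not_false_iff] at hvw
      exact Or.inr (Or.inr ⟨hv, hvw.symm⟩)
    · simp only [hv, hw, if_true, if_false, if_pos, if_neg, not_false_iff] at hvw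
      exact Or.inr (Or.inl ⟨hvw, hw⟩)
    · simp only [hv, hw, if_true, if_false, if_pos, if_neg, not_false_iff] at hvw
      exact Or.inl hvw
  rcases hcases with heq | ⟨h1', h2'⟩ | ⟨h1', h2'⟩
  · -- same original color
    by_cases hjc : j = c
    · rw [hjc, nbrCount_merge_self G φ a c hac, nbrCount_merge_self G φ a c hac]
    · by_cases hja : j = a
      · rw [hja, nbrCount_merge_target G φ a c hac, nbrCount_merge_target G φ a c hac,
          hφ v w heq a, hφ v w heq c]
      · rw [nbrCount_merge_other G φ a c j hja hjc,
          nbrCount_merge_other G φ a c j hja hjc]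
        exact hφ v w heq j
  · exact cross v w h1' h2' j
  · exact (cross w v h2' h1' j).symm
end

section
/- Every perfect coloring of the infinite path graph C∞ (vertex set ℤ, with u adjacent to v iff |u−v| = 1) with finitely many colors is periodic: there exists a positive integer p such that the color of n equals the color of n + p for all integers n. -/
lemma nbr_eq {I : Type*} [DecidableEq I] (c : ℤ → I) (n : ℤ) (j : I) :
    nbrCount pathGraph c n j =
      (if c (n-1) = j then 1 else 0) + (if c (n+1) = j then 1 else 0) := by
  have hset : {u | pathGraph.Adj n u ∧ c u = j} =
      {u : ℤ | (u = n-1 ∨ u = n+1) ∧ c u = j} := by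
    ext u
    simp only [Set.mem_setOf_eq, pathGraph, SimpleGraph.fromRel_adj]
    constructor
    · rintro ⟨⟨hne, h1⟩, h2⟩
      exact ⟨by omega, h2⟩
    · rintro ⟨h1, h2⟩
      exact ⟨⟨by omega, by omega⟩, h2⟩
  rw [nbrCount, hset]
  by_cases h1 : c (n-1) = j <;> by_cases h2 : c (n+1) = j
  · have : {u : ℤ | (u = n-1 ∨ u = n+1) ∧ c u = j} = {n-1, n+1} := by
      ext u; simp only [Set.mem_setOf_eq, Set.mem_insert_iff, Set.mem_singleton_iff]
      constructor
      · rintro ⟨hu, _⟩; exact hu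
      · rintro (rfl | rfl) <;> simp [h1, h2]
    rw [this, Set.ncard_pair (by omega)]
    simp [h1, h2]
  · have : {u : ℤ | (u = n-1 ∨ u = n+1) ∧ c u = j} = {n-1} := by
      ext u; simp only [Set.mem_setOf_eq, Set.mem_singleton_iff]
      constructor
      · rintro ⟨hu | hu, hc⟩
        · exact hu
        · exact absurd (hu ▸ hc) h2
      · rintro rfl; exact ⟨Or.inl rfl, h1⟩
    rw [this, Set.ncard_singleton]; simp [h1, h2]
  · have : {u : ℤ | (u = n-1 ∨ u = n+1) ∧ c u = j} = {n+1} := by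
      ext u; simp only [Set.mem_setOf_eq, Set.mem_singleton_iff]
      constructor
      · rintro ⟨hu | hu, hc⟩
        · exact absurd (hu ▸ hc) h1
        · exact hu
      · rintro rfl; exact ⟨Or.inr rfl, h2⟩
    rw [this, Set.ncard_singleton]; simp [h1, h2]
  · have : {u : ℤ | (u = n-1 ∨ u = n+1) ∧ c u = j} = ∅ := by
      ext u; simp only [Set.mem_setOf_eq, Set.mem_empty_iff_false, iff_false]
      rintro ⟨hu | hu, hc⟩
      · exact h1 (hu ▸ hc)
      · exact h2 (hu ▸ hc)
    rw [this, Set.ncard_empty]; simp [h1, h2]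

lemma key_fwd {I : Type*} (c : ℤ → I) (h : IsPerfectColoring pathGraph c)
    (n m : ℤ) (h0 : c n = c m) (h1 : c (n+1) = c (m+1)) : c (n+2) = c (m+2) := by
  classical
  have := h (n+1) (m+1) h1 (c (n+2))
  rw [nbr_eq, nbr_eq] at this
  have e1 : n + 1 - 1 = n := by ring
  have e2 : n + 1 + 1 = n + 2 := by ring
  have e3 : m + 1 - 1 = m := by ring
  have e4 : m + 1 + 1 = m + 2 := by ring
  rw [e1, e2, e3, e4] at this
  by_contra hne
  rw [h0] at this
  split_ifs at this <;> simp_all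

lemma key_bwd {I : Type*} (c : ℤ → I) (h : IsPerfectColoring pathGraph c)
    (n m : ℤ) (h0 : c n = c m) (h1 : c (n+1) = c (m+1)) : c (n-1) = c (m-1) := by
  classical
  have := h n m h0 (c (n-1))
  rw [nbr_eq, nbr_eq] at this
  by_contra hne
  rw [h1] at this
  split_ifs at this <;> simp_all

/-- Every perfect coloring of the infinite path graph with finitely many colors
is periodic. -/
theorem perfectColoring_path_periodic {I : Type*} [Fintype I]
    (c : ℤ → I) (h : IsPerfectColoring pathGraph c) :
    ∃ p : ℤ, 0 < p ∧ ∀ n : ℤ, c (n + p) = c n := by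
  classical
  obtain ⟨x, y, hxy, hfe⟩ := Finite.exists_ne_map_eq_of_infinite
    (fun n : ℤ => (c n, c (n+1)))
  wlog hlt : x < y generalizing x y
  · exact this y x hxy.symm hfe.symm (by omega)
  have h0 : c x = c y := congrArg Prod.fst hfe
  have h1 : c (x+1) = c (y+1) := congrArg Prod.snd hfe
  have claim : ∀ n : ℤ, c (x + n) = c (y + n) ∧ c (x + n + 1) = c (y + n + 1) := by
    intro n
    induction n using Int.induction_on with
    | zero => simpa using ⟨h0, h1⟩
    | succ k ih =>
      obtain ⟨ha, hb⟩ := ih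
      have := key_fwd c h (x + k) (y + k) ha (by
        convert hb using 2 <;> ring)
      constructor
      · convert hb using 2 <;> push_cast <;> ring
      · convert this using 2 <;> push_cast <;> ring
    | pred k ih =>
      obtain ⟨ha, hb⟩ := ih
      have := key_bwd c h (x + (-k)) (y + (-k)) (by convert ha using 2 <;> push_cast <;> ring)
        (by convert hb using 2 <;> push_cast <;> ring)
      constructor
      · convert this using 2 <;> push_cast <;> ring
      · convert ha using 2 <;> push_cast <;> ring
  refine ⟨y - x, by omega, fun n => ?_⟩
  have := (claim (n - x)).1
  have e1 : x + (n - x) = n := by ring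
  have e2 : y + (n - x) = n + (y - x) := by ring
  rw [e1, e2] at this
  exact this.symm
end

section
/- For every k ≥ 2, the coloring c : ℤ → {0,1,…,k−1} defined by c(n) = |((n mod (2k−2)) − (k−1))| (reflecting n into {0,…,k−1}) is a perfect coloring of the infinite path graph (the mirror coloring of type (1,1) with period [k−1 k−2 … 1 0 1 … k−2]). -/
lemma path_adj (v u : ℤ) : pathGraph.Adj v u ↔ u = v - 1 ∨ u = v + 1 := by
  simp only [pathGraph, SimpleGraph.fromRel_adj]
  constructor
  · rintro ⟨h, h1 | h1⟩ <;> omega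
  · rintro (h | h) <;> constructor <;> omega

lemma nbrCount_path {I : Type*} [DecidableEq I] (c : ℤ → I) (v : ℤ) (j : I) :
    nbrCount pathGraph c v j
      = (if c (v-1) = j then 1 else 0) + (if c (v+1) = j then 1 else 0) := by
  unfold nbrCount
  by_cases h1 : c (v-1) = j <;> by_cases h2 : c (v+1) = j
  · have hs : {u | pathGraph.Adj v u ∧ c u = j} = {v-1, v+1} := by
      ext u
      simp only [Set.mem_setOf_eq, path_adj, Set.mem_insert_iff, Set.mem_singleton_iff]
      constructor
      · rintro ⟨h, _⟩; exact h
      · rintro (h | h) <;> subst h <;> simp [h1, h2]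
    rw [hs, Set.ncard_pair (by omega), if_pos h1, if_pos h2]
  · have hs : {u | pathGraph.Adj v u ∧ c u = j} = {v-1} := by
      ext u
      simp only [Set.mem_setOf_eq, path_adj, Set.mem_singleton_iff]
      constructor
      · rintro ⟨h | h, hc⟩
        · exact h
        · exact absurd (h ▸ hc) h2
      · rintro h; subst h; exact ⟨Or.inl rfl, h1⟩
    rw [hs, Set.ncard_singleton, if_pos h1, if_neg h2]
  · have hs : {u | pathGraph.Adj v u ∧ c u = j} = {v+1} := by
      ext u
      simp only [Set.mem_setOf_eq, path_adj, Set.mem_singleton_iff]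
      constructor
      · rintro ⟨h | h, hc⟩
        · exact absurd (h ▸ hc) h1
        · exact h
      · rintro h; subst h; exact ⟨Or.inr rfl, h2⟩
    rw [hs, Set.ncard_singleton, if_neg h1, if_pos h2]
  · have hs : {u | pathGraph.Adj v u ∧ c u = j} = ∅ := by
      ext u
      simp only [Set.mem_setOf_eq, path_adj, Set.mem_empty_iff_false, iff_false]
      rintro ⟨h | h, hc⟩
      · exact h1 (h ▸ hc)
      · exact h2 (h ▸ hc)
    rw [hs, Set.ncard_empty, if_neg h1, if_neg h2]

lemma mirror_key (k : ℤ) (hk : 2 ≤ k) (v : ℤ) :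
    (|(v-1) % (2*k-2) - (k-1)| = abs (|v % (2*k-2) - (k-1)| - 1) ∧
       |(v+1) % (2*k-2) - (k-1)|
         = (if |v % (2*k-2) - (k-1)| = k-1 then k-2 else |v % (2*k-2) - (k-1)| + 1)) ∨
    (|(v+1) % (2*k-2) - (k-1)| = abs (|v % (2*k-2) - (k-1)| - 1) ∧
       |(v-1) % (2*k-2) - (k-1)|
         = (if |v % (2*k-2) - (k-1)| = k-1 then k-2 else |v % (2*k-2) - (k-1)| + 1)) := by
  set m : ℤ := 2*k-2 with hmdef
  have hm : 0 < m := by omega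
  have h0 : 0 ≤ v % m := Int.emod_nonneg v (by omega)
  have h1 : v % m < m := Int.emod_lt_of_pos v hm
  have hone : (1 : ℤ) % m = 1 := Int.emod_eq_of_lt (by norm_num) (by omega)
  have hp : (v+1) % m = (if v % m = m - 1 then 0 else v % m + 1) := by
    rw [Int.add_emod, hone]
    split_ifs with h
    · rw [h, sub_add_cancel, Int.emod_self]
    · exact Int.emod_eq_of_lt (by omega) (by omega)
  have hq : (v-1) % m = (if v % m = 0 then m - 1 else v % m - 1) := by
    rw [Int.sub_emod, hone]
    split_ifs with h
    · rw [h]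
      have h2 : ((0:ℤ) - 1) % m = ((m-1) + m * (-1)) % m := by ring_nf
      rw [h2, Int.add_mul_emod_self_left]
      exact Int.emod_eq_of_lt (by omega) (by omega)
    · exact Int.emod_eq_of_lt (by omega) (by omega)
  rw [hp, hq]
  split_ifs <;> simp only [Int.abs_eq_natAbs] at * <;> omega


/-- The mirror coloring of type (1,1) is a perfect coloring of the infinite path graph. -/
theorem mirror11_coloring_isPerfect (k : ℤ) (hk : 2 ≤ k) :
    IsPerfectColoring pathGraph (fun n : ℤ => |n % (2 * k - 2) - (k - 1)|) := by
  intro v w h j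
  simp only at h
  rw [nbrCount_path, nbrCount_path]
  have hv := mirror_key k hk v
  have hw := mirror_key k hk w
  rw [h] at hv
  rcases hv with ⟨ha, hb⟩ | ⟨ha, hb⟩ <;> rcases hw with ⟨hc, hd⟩ | ⟨hc, hd⟩ <;>
    rw [ha, hb, hc, hd] <;> split_ifs <;> omega
end

section
/- Let ψ be a coloring of C∞ · Kₙ̄ (vertex set ℤ × {1,…,n}, (i,j) adjacent to (i',j') iff |i−i'| = 1) that is periodic with period 4 in the first coordinate. Suppose that for every color j and every i ∈ ℤ, N_j(i−1) + N_j(i+1) = N_j(i) + N_j(i+2), where N_j(i) is the number of vertices of color j in block i. Then ψ is a perfect coloring. -/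
/-- The infinite multipath graph `C∞ · Kₙ̄`. -/
def multipathEmpty (n : ℕ) : SimpleGraph (ℤ × Fin n) :=
  lexProd pathGraph (⊥ : SimpleGraph (Fin n))

/-- The number of vertices of color `j` in block `i`. -/
noncomputable def blockCount {n : ℕ} {I : Type*} (ψ : ℤ × Fin n → I) (i : ℤ) (j : I) : ℕ :=
  {w : Fin n | ψ (i, w) = j}.ncard

lemma multipath_adj {n : ℕ} (i i' : ℤ) (a b : Fin n) :
    (multipathEmpty n).Adj (i, a) (i', b) ↔ (i' = i + 1 ∨ i' = i - 1) := by
  simp only [multipathEmpty, lexProd, pathGraph, SimpleGraph.fromRel_adj,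
    SimpleGraph.bot_adj, and_false, or_false, ne_eq, Prod.mk.injEq, not_and]
  constructor
  · rintro ⟨_, h⟩; omega
  · intro h
    refine ⟨fun hi _ => by omega, ?_⟩
    left; exact ⟨by omega, by omega⟩

lemma nbr_eq_s14 {n : ℕ} {I : Type*} (ψ : ℤ × Fin n → I) (i : ℤ) (a : Fin n) (j : I) :
    nbrCount (multipathEmpty n) ψ (i, a) j =
      blockCount ψ (i - 1) j + blockCount ψ (i + 1) j := by
  have hset : {u | (multipathEmpty n).Adj (i, a) u ∧ ψ u = j} =
      (Prod.mk (i - 1) '' {w : Fin n | ψ (i - 1, w) = j}) ∪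
      (Prod.mk (i + 1) '' {w : Fin n | ψ (i + 1, w) = j}) := by
    ext ⟨i', b⟩
    simp only [Set.mem_setOf_eq, Set.mem_union, Set.mem_image, multipath_adj,
      Prod.mk.injEq]
    constructor
    · rintro ⟨(rfl | rfl), hb⟩
      · right; exact ⟨b, hb, rfl, rfl⟩
      · left; exact ⟨b, hb, rfl, rfl⟩
    · rintro (⟨w, hw, rfl, rfl⟩ | ⟨w, hw, rfl, rfl⟩)
      · exact ⟨Or.inr rfl, hw⟩
      · exact ⟨Or.inl rfl, hw⟩
  have hinj : ∀ m : ℤ, Function.Injective (Prod.mk m : Fin n → ℤ × Fin n) :=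
    fun m x y hxy => by simpa using hxy
  rw [nbrCount, hset, Set.ncard_union_eq]
  · rw [Set.ncard_image_of_injective _ (hinj _), Set.ncard_image_of_injective _ (hinj _)]
    rfl
  · rw [Set.disjoint_left]
    rintro ⟨i', b⟩ h1 h2
    simp only [Set.mem_image, Prod.mk.injEq] at h1 h2
    obtain ⟨w, _, hw, _⟩ := h1
    obtain ⟨w', _, hw', _⟩ := h2
    omega

/-- A 4-periodic coloring of `C∞ · Kₙ̄` with matched semicolorings is perfect. -/
theorem matched_semicolorings_isPerfect {n : ℕ} {I : Type*}
    (ψ : ℤ × Fin n → I) (hper : ∀ (i : ℤ) (j : Fin n), ψ (i + 4, j) = ψ (i, j))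
    (h : ∀ (j : I) (i : ℤ),
      blockCount ψ (i - 1) j + blockCount ψ (i + 1) j =
        blockCount ψ i j + blockCount ψ (i + 2) j) :
    IsPerfectColoring (multipathEmpty n) ψ := by
  have hstep : ∀ (j : I) (i : ℤ),
      blockCount ψ (i + 1 - 1) j + blockCount ψ (i + 1 + 1) j =
        blockCount ψ (i - 1) j + blockCount ψ (i + 1) j := by
    intro j i
    have e1 : i + 1 - 1 = i := by ring
    have e2 : i + 1 + 1 = i + 2 := by ring
    rw [e1, e2, ← h j i]
  have hconst : ∀ (j : I) (i : ℤ),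
      blockCount ψ (i - 1) j + blockCount ψ (i + 1) j =
        blockCount ψ (0 - 1) j + blockCount ψ (0 + 1) j := by
    intro j i
    induction i using Int.induction_on with
    | zero => rfl
    | succ k ih => rw [hstep j k, ih]
    | pred k ih =>
        have := hstep j (-(k : ℤ) - 1)
        have e : -(k : ℤ) - 1 + 1 = -k := by ring
        rw [e] at this
        calc blockCount ψ (-(k : ℤ) - 1 - 1) j + blockCount ψ (-(k : ℤ) - 1 + 1) j
            = blockCount ψ (-(k : ℤ) - 1 - 1) j + blockCount ψ (-(k : ℤ)) j := by rw [e]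
          _ = blockCount ψ (-(k : ℤ) - 1) j + blockCount ψ (-(k : ℤ) + 1) j := this.symm
          _ = _ := ih
  rintro ⟨i, a⟩ ⟨i', b⟩ _ j
  rw [nbr_eq_s14, nbr_eq_s14, hconst j i, hconst j i']
end

section
/- Let ψ be a perfect coloring of C∞ · Kₙ and suppose there exist colors p ≠ q and an index i such that all vertices of block V_{i+1} have color p, all vertices of block V_{i+2} have color q, and p and q are equivalent colors. Then for every color s ∉ {p,q}, N_s(i) = N_s(i+3), where N_s(m) is the number of vertices of color s in block m. -/
/-- The infinite multipath graph `C∞ · Kₙ`. -/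
def multipathComplete (n : ℕ) : SimpleGraph (ℤ × Fin n) :=
  lexProd pathGraph (⊤ : SimpleGraph (Fin n))

lemma mpc_adj {n : ℕ} (a b : ℤ) (w w' : Fin n) :
    (multipathComplete n).Adj (a, w) (b, w') ↔
      (b = a + 1 ∨ a = b + 1) ∨ (a = b ∧ w ≠ w') := by
  simp only [multipathComplete, lexProd, pathGraph, SimpleGraph.fromRel_adj, SimpleGraph.top_adj,
    ne_eq, Prod.mk.injEq, not_and]
  constructor
  · rintro ⟨hne, (⟨h1, h2⟩ | ⟨h1, h2⟩) | (⟨h1, h2⟩ | ⟨h1, h2⟩)⟩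
    · left; omega
    · exact Or.inr ⟨h1, h2⟩
    · left; omega
    · exact Or.inr ⟨h1.symm, fun e => h2 e.symm⟩
  · rintro ((h | h) | ⟨h1, h2⟩)
    · exact ⟨fun e _ => by omega, Or.inl (Or.inl ⟨by omega, Or.inl h⟩)⟩
    · exact ⟨fun e _ => by omega, Or.inr (Or.inl ⟨by omega, Or.inl h⟩)⟩
    · exact ⟨fun _ => h2, Or.inl (Or.inr ⟨h1, h2⟩)⟩

lemma count_side {n : ℕ} {I : Type*} (φ : ℤ × Fin n → I) (m t : ℤ)
    (ht : t = m - 1 ∨ t = m + 1) (s : I) (w : Fin n)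
    (hother : ∀ (a : ℤ) (w' : Fin n), (a = 2 * m - t ∨ (a = m ∧ w' ≠ w)) → φ (a, w') ≠ s) :
    nbrCount (multipathComplete n) φ (m, w) s = {w' : Fin n | φ (t, w') = s}.ncard := by
  unfold nbrCount
  have hset : {u | (multipathComplete n).Adj (m, w) u ∧ φ u = s}
      = (fun w' => ((t : ℤ), w')) '' {w' : Fin n | φ (t, w') = s} := by
    ext ⟨a, w'⟩
    simp only [Set.mem_setOf_eq, Set.mem_image, mpc_adj, Prod.mk.injEq]
    constructor
    · rintro ⟨(h | h) | ⟨h1, h2⟩, hc⟩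
      · rcases ht with rfl | rfl
        · exact absurd hc (hother a w' (Or.inl (by omega)))
        · exact ⟨w', by rw [show m + 1 = a by omega]; exact hc, by omega, rfl⟩
      · rcases ht with rfl | rfl
        · exact ⟨w', by rw [show m - 1 = a by omega]; exact hc, by omega, rfl⟩
        · exact absurd hc (hother a w' (Or.inl (by omega)))
      · exact absurd hc (hother a w' (Or.inr ⟨h1.symm, fun e => h2 e.symm⟩))
    · rintro ⟨x, hx, rfl, rfl⟩
      exact ⟨by omega, hx⟩
  rw [hset, Set.ncard_image_of_injective _ (fun x y hxy => by simpa using hxy)]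

/-- If two consecutive blocks of `C∞ · Kₙ` are monochrome in equivalent colors
`p` and `q`, then the counts of every other color agree in blocks `i` and `i+3`. -/
theorem multipathComplete_monochrome_blocks {n : ℕ} {I : Type*} [DecidableEq I]
    (ψ : ℤ × Fin n → I) (h : IsPerfectColoring (multipathComplete n) ψ)
    (p q : I) (hpq : p ≠ q) (i : ℤ)
    (hp : ∀ w : Fin n, ψ (i + 1, w) = p) (hq : ∀ w : Fin n, ψ (i + 2, w) = q)
    (hequiv : IsPerfectColoring (multipathComplete n)
      (fun v => if ψ v = q then p else ψ v)) :
    ∀ s : I, s ≠ p → s ≠ q → blockCount ψ i s = blockCount ψ (i + 3) s := by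
  intro s hsp hsq
  rcases n with _ | n
  · simp [blockCount, Set.eq_empty_of_isEmpty]
  set φ : ℤ × Fin (n + 1) → I := fun v => if ψ v = q then p else ψ v with hφ
  have hφs : ∀ v, φ v = s ↔ ψ v = s := by
    intro v
    simp only [hφ]
    split_ifs with hvq
    · exact ⟨fun e => absurd e.symm hsp, fun e => absurd (e.symm.trans hvq) hsq⟩
    · exact Iff.rfl
  have h1 : nbrCount (multipathComplete (n + 1)) φ (i + 1, 0) s = blockCount ψ i s := by
    rw [count_side φ (i + 1) i (Or.inl (by ring)) s 0]
    · unfold blockCount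
      congr 1
      ext w'; exact hφs (i, w')
    · rintro a w' (ha | ⟨ha, _⟩) he
      · rw [hφs] at he
        rw [show a = i + 2 by omega] at he
        exact hsq (he ▸ (hq w').symm ▸ rfl)
      · subst ha
        rw [hφs, hp w'] at he
        exact hsp he.symm
  have h2 : nbrCount (multipathComplete (n + 1)) φ (i + 2, 0) s = blockCount ψ (i + 3) s := by
    rw [count_side φ (i + 2) (i + 3) (Or.inr (by ring)) s 0]
    · unfold blockCount
      congr 1
      ext w'; exact hφs (i + 3, w')
    · rintro a w' (ha | ⟨ha, _⟩) he
      · rw [hφs] at he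
        rw [show a = i + 1 by omega, hp w'] at he
        exact hsp he.symm
      · subst ha
        rw [hφs, hq w'] at he
        exact hsq he.symm
  have hcol : φ (i + 1, (0 : Fin (n + 1))) = φ (i + 2, (0 : Fin (n + 1))) := by
    simp only [hφ]
    rw [hp, hq, if_neg hpq, if_pos rfl]
  rw [← h1, ← h2]
  exact hequiv _ _ hcol s
end
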